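/- Unified convergence theorem (deterministic form): under the hypotheses that r_{k+1} ≤ (1−γμ)r_k + Bγ²s_k + D₁γ² − 2γ(1−Aγ)F_k and s_{k+1} ≤ (1−ρ)s_k + 2C F_k + D₂ with all quantities nonnegative, F_k ≥ 0, 0 < ρ ≤ 1, μ > 0, M > B/ρ, and 0 < γ ≤ min(1/μ, 1/(A + CM)), the sequence V_k = r_k + Mγ²s_k satisfies V_k ≤ (1 − min(γμ, ρ − B/M))^k V_0 + (D₁ + MD₂)γ² / min(γμ, ρ − B/M) for all k ≥ 1. -/
import Mathlib


theorem unified_convergence (r s F : ℕ → ℝ) (γ μ A B C ρ M D₁ D₂ : ℝ)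
    (hr : ∀ k, 0 ≤ r k) (hs : ∀ k, 0 ≤ s k) (hF : ∀ k, 0 ≤ F k)
    (hμ : 0 < μ) (hA : 0 ≤ A) (hB : 0 ≤ B) (hC : 0 ≤ C)
    (hρ0 : 0 < ρ) (hρ1 : ρ ≤ 1) (hM0 : 0 ≤ M) (hD₁ : 0 ≤ D₁) (hD₂ : 0 ≤ D₂)
    (hM : M > B / ρ) (hγ0 : 0 < γ) (hγle : γ ≤ min (1 / μ) (1 / (A + C * M)))
    (hrec1 : ∀ k, r (k + 1) ≤ (1 - γ * μ) * r k + B * γ ^ 2 * s k + D₁ * γ ^ 2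
      - 2 * γ * (1 - A * γ) * F k)
    (hrec2 : ∀ k, s (k + 1) ≤ (1 - ρ) * s k + 2 * C * F k + D₂) :
    ∀ k ≥ 1, r k + M * γ ^ 2 * s k ≤
      (1 - min (γ * μ) (ρ - B / M)) ^ k * (r 0 + M * γ ^ 2 * s 0) +
        (D₁ + M * D₂) * γ ^ 2 / min (γ * μ) (ρ - B / M) := by
  set δ := min (γ * μ) (ρ - B / M) with hδdef
  have hM0' : 0 < M := lt_of_le_of_lt (div_nonneg hB hρ0.le) hM
  have hBρ : B < M * ρ := (div_lt_iff₀ hρ0).mp hM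
  have hBM : B / M < ρ := (div_lt_iff₀ hM0').mpr (by linarith)
  have hδ0 : 0 < δ := lt_min (mul_pos hγ0 hμ) (sub_pos.mpr hBM)
  have hγμ1 : γ * μ ≤ 1 := by
    have := le_trans hγle (min_le_left _ _)
    calc γ * μ ≤ (1 / μ) * μ := by nlinarith
    _ = 1 := by field_simp
  have hδ1 : δ ≤ 1 := le_trans (min_le_left _ _) hγμ1
  have hACM : 0 < A + C * M := by
    rcases (lt_or_eq_of_le (by positivity : (0:ℝ) ≤ A + C * M)) with h | h
    · exact h
    · exfalso
      have h2 := le_trans hγle (min_le_right _ _)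
      rw [← h] at h2; simp at h2; linarith
  have hγACM : (A + C * M) * γ ≤ 1 := by
    have h2 := le_trans hγle (min_le_right _ _)
    calc (A + C * M) * γ ≤ (A + C * M) * (1 / (A + C * M)) :=
          mul_le_mul_of_nonneg_left h2 hACM.le
    _ = 1 := by field_simp
  have hδr : δ ≤ γ * μ := min_le_left _ _
  have hδs : δ ≤ ρ - B / M := min_le_right _ _
  have hBMeq : M * (B / M) = B := mul_div_cancel₀ _ hM0'.ne'
  have hstep : ∀ n, r (n + 1) + M * γ ^ 2 * s (n + 1) ≤
      (1 - δ) * (r n + M * γ ^ 2 * s n) + (D₁ + M * D₂) * γ ^ 2 := by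
    intro n
    have h1 := hrec1 n
    have h2 : M * γ ^ 2 * s (n + 1) ≤ M * γ ^ 2 * ((1 - ρ) * s n + 2 * C * F n + D₂) :=
      mul_le_mul_of_nonneg_left (hrec2 n) (by positivity)
    have hFterm : 0 ≤ 2 * γ * (1 - (A + C * M) * γ) * F n :=
      mul_nonneg (mul_nonneg (by positivity) (by linarith)) (hF n)
    have hcoef : B + M * (1 - ρ) ≤ M * (1 - δ) := by
      have := mul_le_mul_of_nonneg_left hδs hM0'.le
      nlinarith
    have hrc : (1 - γ * μ) * r n ≤ (1 - δ) * r n :=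
      mul_le_mul_of_nonneg_right (by linarith) (hr n)
    have hsc : (B + M * (1 - ρ)) * (γ ^ 2 * s n) ≤ (M * (1 - δ)) * (γ ^ 2 * s n) :=
      mul_le_mul_of_nonneg_right hcoef (mul_nonneg (sq_nonneg γ) (hs n))
    nlinarith [h1, h2, hFterm, hrc, hsc]
  have main : ∀ n, r n + M * γ ^ 2 * s n ≤
      (1 - δ) ^ n * (r 0 + M * γ ^ 2 * s 0) +
        (D₁ + M * D₂) * γ ^ 2 / δ * (1 - (1 - δ) ^ n) := by
    intro n
    induction n with
    | zero => simp
    | succ n ih =>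
      have h1 := hstep n
      have h2 : (1 - δ) * (r n + M * γ ^ 2 * s n) ≤
          (1 - δ) * ((1 - δ) ^ n * (r 0 + M * γ ^ 2 * s 0) +
            (D₁ + M * D₂) * γ ^ 2 / δ * (1 - (1 - δ) ^ n)) :=
        mul_le_mul_of_nonneg_left ih (by linarith)
      have hK : δ * ((D₁ + M * D₂) * γ ^ 2 / δ) = (D₁ + M * D₂) * γ ^ 2 := by
        field_simp
      calc r (n + 1) + M * γ ^ 2 * s (n + 1)
          ≤ (1 - δ) * ((1 - δ) ^ n * (r 0 + M * γ ^ 2 * s 0) +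
            (D₁ + M * D₂) * γ ^ 2 / δ * (1 - (1 - δ) ^ n)) + (D₁ + M * D₂) * γ ^ 2 :=
            le_trans h1 (by linarith)
        _ = (1 - δ) ^ (n + 1) * (r 0 + M * γ ^ 2 * s 0) +
            (D₁ + M * D₂) * γ ^ 2 / δ * (1 - (1 - δ) ^ (n + 1)) := by
            field_simp; ring
  intro k _
  have h := main k
  have hpow : 0 ≤ (1 - δ) ^ k := pow_nonneg (by linarith) k
  have hK0 : 0 ≤ (D₁ + M * D₂) * γ ^ 2 / δ := by positivity
  have hle : (D₁ + M * D₂) * γ ^ 2 / δ * (1 - (1 - δ) ^ k) ≤ (D₁ + M * D₂) * γ ^ 2 / δ := by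
    have heq : (D₁ + M * D₂) * γ ^ 2 / δ * (1 - (1 - δ) ^ k) =
        (D₁ + M * D₂) * γ ^ 2 / δ - (D₁ + M * D₂) * γ ^ 2 / δ * (1 - δ) ^ k := by ring
    rw [heq]
    linarith [mul_nonneg hK0 hpow]
  linarith
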